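/- Let R be a ring and M a right R-module. An endomorphism φ of M is a strongly clean element of the endomorphism ring End_R(M) if and only if there exist submodules A and B of M such that M is the internal direct sum A ⊕ B, φ(A) ⊆ A, φ(B) ⊆ B, the restriction of φ to A is an automorphism of A, and the restriction of 1 − φ to B is an automorphism of B. -/

import Mathlib

/-- An element of a ring is *strongly clean* if it is the sum of an idempotent and a unit
that commute with each other. -/
def IsStronglyClean {S : Type*} [Ring S] (a : S) : Prop :=
  ∃ e u : S, IsIdempotentElem e ∧ IsUnit u ∧ a = e + u ∧ e * u = u * e

/-- Nicholson's lemma: an endomorphism `φ` of a module `M` is strongly clean in `End_R(M)`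
iff `M` decomposes as an internal direct sum `A ⊕ B` of `φ`-invariant submodules on which,
respectively, `φ` restricts to an automorphism of `A` and `1 - φ` restricts to an
automorphism of `B`. -/
theorem stronglyClean_end_iff {R M : Type*} [Ring R] [AddCommGroup M] [Module R M]
    (φ : Module.End R M) :
    IsStronglyClean φ ↔
      ∃ A B : Submodule R M, IsCompl A B ∧
        Set.MapsTo φ (A : Set M) (A : Set M) ∧ Set.MapsTo φ (B : Set M) (B : Set M) ∧
        Set.BijOn φ (A : Set M) (A : Set M) ∧
        Set.BijOn (⇑(1 - φ)) (B : Set M) (B : Set M) := by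
  constructor
  · rintro ⟨e, u, he, hu, rfl, hcomm⟩
    obtain ⟨v, rfl⟩ := hu
    have hbij : Function.Bijective (v : Module.End R M) :=
      (Module.End.isUnit_iff _).1 v.isUnit
    set u : Module.End R M := (v : Module.End R M)
    have hinv : e * (↑v⁻¹ : Module.End R M) = ↑v⁻¹ * e := by
      have : Commute u e := hcomm.symm
      exact (this.units_inv_left).symm
    have hee : ∀ x, e (e x) = e x := fun x => by
      conv_rhs => rw [← he]
      rfl
    refine ⟨LinearMap.ker e, LinearMap.range e, ?_, ?_, ?_, ?_, ?_⟩
    · constructor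
      · rw [disjoint_iff_inf_le]
        rintro x ⟨hx1, y, rfl⟩
        have : e (e y) = 0 := hx1
        rw [hee] at this
        simp [this]
      · rw [codisjoint_iff_le_sup]
        intro x _
        refine Submodule.mem_sup.2 ⟨x - e x, ?_, e x, ⟨x, rfl⟩, by abel⟩
        simp [LinearMap.mem_ker, map_sub, hee]
    · intro x hx
      have hx : e x = 0 := hx
      have : e ((e + u) x) = 0 := by
        have h1 : e (u x) = u (e x) := congrFun (congrArg DFunLike.coe hcomm) x
        simp [LinearMap.mem_ker, map_add, hee, hx, h1]
      exact this
    · rintro x ⟨y, rfl⟩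
      refine ⟨(e + u) y, ?_⟩
      have h1 : e (u y) = u (e y) := congrFun (congrArg DFunLike.coe hcomm) y
      simp [map_add, hee, h1]
    · have hmapsto : Set.MapsTo u (LinearMap.ker e : Set M) (LinearMap.ker e) := by
        intro x hx
        have hx : e x = 0 := hx
        have h1 : e (u x) = u (e x) := congrFun (congrArg DFunLike.coe hcomm) x
        show e (u x) = 0
        rw [h1, hx, map_zero]
      refine ⟨?_, ?_, ?_⟩
      · intro x hx
        have hx' : e x = 0 := hx
        show (e + u) x ∈ _
        have : (e + u) x = u x := by simp [LinearMap.add_apply, hx']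
        rw [this]; exact hmapsto hx
      · intro x hx y hy hxy
        have hx' : e x = 0 := hx
        have hy' : e y = 0 := hy
        simp only [LinearMap.add_apply, hx', hy', zero_add] at hxy
        exact hbij.1 hxy
      · intro y hy
        have hy' : e y = 0 := hy
        refine ⟨(↑v⁻¹ : Module.End R M) y, ?_, ?_⟩
        · show e _ = 0
          have h1 : e ((↑v⁻¹ : Module.End R M) y) = (↑v⁻¹ : Module.End R M) (e y) :=
            congrFun (congrArg DFunLike.coe hinv) y
          rw [h1, hy', map_zero]
        · have h2 : e ((↑v⁻¹ : Module.End R M) y) = 0 := by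
            have h1 : e ((↑v⁻¹ : Module.End R M) y) = (↑v⁻¹ : Module.End R M) (e y) :=
              congrFun (congrArg DFunLike.coe hinv) y
            rw [h1, hy', map_zero]
          show (e + u) _ = y
          have h3 : u ((↑v⁻¹ : Module.End R M) y) = y := by
            have := congrFun (congrArg DFunLike.coe v.mul_inv) y
            exact this
          simp [LinearMap.add_apply, h2, h3]
    · -- on range e, (1 - (e+u)) x = -u x
      have key : ∀ x : M, e x = x → (1 - (e + u)) x = -(u x) := by
        intro x hx
        show x - (e x + u x) = -(u x)
        rw [hx]; abel
      have hmem : ∀ x : M, x ∈ LinearMap.range e → e x = x := by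
        rintro x ⟨y, rfl⟩; exact hee y
      have hmapsto : ∀ x : M, e x = x → e (u x) = u x := by
        intro x hx
        have h1 : e (u x) = u (e x) := congrFun (congrArg DFunLike.coe hcomm) x
        rw [h1, hx]
      refine ⟨?_, ?_, ?_⟩
      · intro x hx
        have hx' := hmem x hx
        show (1 - (e + u)) x ∈ LinearMap.range e
        rw [key x hx']
        exact ⟨-(u x), by rw [map_neg, hmapsto x hx']⟩
      · intro x hx y hy hxy
        have hx' := hmem x hx
        have hy' := hmem y hy
        rw [key x hx', key y hy', neg_inj] at hxy
        exact hbij.1 hxy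
      · intro y hy
        have hy' := hmem y hy
        refine ⟨-((↑v⁻¹ : Module.End R M) y), ?_, ?_⟩
        · have h1 : e ((↑v⁻¹ : Module.End R M) y) = (↑v⁻¹ : Module.End R M) (e y) :=
            congrFun (congrArg DFunLike.coe hinv) y
          have h2 : e (-((↑v⁻¹ : Module.End R M) y)) = -((↑v⁻¹ : Module.End R M) y) := by
            rw [map_neg, h1, hy']
          exact ⟨_, h2⟩
        · have h1 : e ((↑v⁻¹ : Module.End R M) y) = (↑v⁻¹ : Module.End R M) (e y) :=
            congrFun (congrArg DFunLike.coe hinv) y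
          have h2 : e (-((↑v⁻¹ : Module.End R M) y)) = -((↑v⁻¹ : Module.End R M) y) := by
            rw [map_neg, h1, hy']
          show (1 - (e + u)) _ = y
          rw [key _ h2, map_neg, neg_neg]
          exact congrFun (congrArg DFunLike.coe v.mul_inv) y
  · rintro ⟨A, B, hAB, hA, hB, hbijA, hbijB⟩
    -- e := projection onto B along A
    set e : Module.End R M := B.subtype.comp (B.linearProjOfIsCompl A hAB.symm) with he_def
    have heA : ∀ x ∈ A, e x = 0 := fun x hx => by
      simp [he_def, Submodule.linearProjOfIsCompl, Submodule.linearProjOfIsCompl_apply_right' hAB.symm hx]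
    have heB : ∀ x ∈ B, e x = x := fun x hx => by
      simp [he_def, Submodule.linearProjOfIsCompl, Submodule.projectionOnto_apply_of_mem_left hAB.symm hx]
    set u : Module.End R M := φ - e with hu_def
    have hdecomp : ∀ x : M, ∃ a ∈ A, ∃ b ∈ B, x = a + b := by
      intro x
      have : x ∈ A ⊔ B := by rw [hAB.sup_eq_top]; trivial
      obtain ⟨a, ha, b, hb, h⟩ := Submodule.mem_sup.1 this
      exact ⟨a, ha, b, hb, h.symm⟩
    have huA : ∀ x ∈ A, u x = φ x := fun x hx => by
      simp [hu_def, LinearMap.sub_apply, heA x hx]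
    have huB : ∀ x ∈ B, u x = -((1 - φ) x) := fun x hx => by
      have : (1 - φ) x = x - φ x := rfl
      simp [hu_def, LinearMap.sub_apply, heB x hx, this]
    have huAmem : ∀ x ∈ A, u x ∈ A := fun x hx => by
      rw [huA x hx]; exact hA hx
    have huBmem : ∀ x ∈ B, u x ∈ B := fun x hx => by
      rw [huB x hx]; exact B.neg_mem (hbijB.mapsTo hx)
    have hAB0 : ∀ x, x ∈ A → x ∈ B → x = 0 := by
      intro x hxa hxb
      have := hAB.disjoint
      rw [disjoint_iff_inf_le] at this
      exact (Submodule.mem_bot R).1 (this ⟨hxa, hxb⟩)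
    have huinj : Function.Injective u := by
      have h0 : ∀ x, u x = 0 → x = 0 := by
        intro x hx0
        obtain ⟨a, ha, b, hb, rfl⟩ := hdecomp x
        have hsum : u a + u b = 0 := by rw [← map_add, hx0]
        have hua : u a = -(u b) := by
          rw [eq_neg_iff_add_eq_zero]; exact hsum
        have h1 : u a ∈ B := hua ▸ B.neg_mem (huBmem b hb)
        have h2 : u a = 0 := hAB0 _ (huAmem a ha) h1
        have h3 : u b = 0 := by
          rw [h2, zero_add] at hsum; exact hsum
        have ha0 : a = 0 := by
          have : φ a = φ 0 := by rw [map_zero, ← huA a ha, h2]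
          exact hbijA.injOn ha (Submodule.zero_mem A) this
        have hb0 : b = 0 := by
          have : (1 - φ) b = (1 - φ) 0 := by
            rw [map_zero, ← neg_eq_zero, ← huB b hb, h3]
          exact hbijB.injOn hb (Submodule.zero_mem B) this
        rw [ha0, hb0, add_zero]
      intro x y hxy
      have : u (x - y) = 0 := by rw [map_sub, hxy, sub_self]
      exact sub_eq_zero.1 (h0 _ this)
    have husurj : Function.Surjective u := by
      intro y
      obtain ⟨a, ha, b, hb, rfl⟩ := hdecomp y
      obtain ⟨a', ha', haa⟩ := hbijA.surjOn ha
      obtain ⟨b', hb', hbb⟩ := hbijB.surjOn (B.neg_mem hb)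
      refine ⟨a' + b', ?_⟩
      rw [map_add, huA a' ha', huB b' hb', haa, hbb, neg_neg]
    refine ⟨e, u, ?_, ?_, ?_, ?_⟩
    · show e * e = e
      ext x
      obtain ⟨a, ha, b, hb, rfl⟩ := hdecomp x
      show e (e (a + b)) = e (a + b)
      rw [map_add, heA a ha, heB b hb, zero_add, heB b hb]
    · exact (Module.End.isUnit_iff u).2 ⟨huinj, husurj⟩
    · rw [hu_def]; abel
    · ext x
      obtain ⟨a, ha, b, hb, rfl⟩ := hdecomp x
      show e (u (a + b)) = u (e (a + b))
      have l1 : e (a + b) = b := by rw [map_add, heA a ha, heB b hb, zero_add]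
      have l2 : e (u (a + b)) = u b := by
        rw [map_add u, map_add, heA _ (huAmem a ha), heB _ (huBmem b hb), zero_add]
      rw [l1, l2]
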